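/- In the algebra U_E(λ) over a field F of characteristic ≠ 2, with basis a set E of idempotents and multiplication e_i e_j = δ e_i + λ e_j (δ = 1 − λ, λ ∉ {0,1}), for any fixed a ∈ E the subspace Z = span{e − a : e ∈ E} is a two-sided ideal with Z² = 0, and U_E(λ) = Fa ⊕ Z. -/

import Mathlib

/-- In `U_E(λ)` (char F ≠ 2, λ ∉ {0,1}, δ = 1-λ), for a fixed basis idempotent `a = e i₀`,
the subspace `Z = span{e i - a}` is a two-sided ideal with `Z² = 0`, and
`U_E(λ) = F a ⊕ Z`. -/
theorem stmt1 {F A I : Type*} [Field F] [NonUnitalNonAssocRing A] [Module F A]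
    [SMulCommClass F A A] [IsScalarTower F A A]
    (hchar : (2 : F) ≠ 0) (lam : F) (hl0 : lam ≠ 0) (hl1 : lam ≠ 1)
    (e : I → A) (hindep : LinearIndependent F e)
    (hspan : Submodule.span F (Set.range e) = ⊤)
    (hmul : ∀ i j, e i * e j = (1 - lam) • e i + lam • e j)
    (i0 : I) :
    ∀ Z : Submodule F A, Z = Submodule.span F {x : A | ∃ i, x = e i - e i0} →
      (∀ z ∈ Z, ∀ u : A, u * z ∈ Z ∧ z * u ∈ Z) ∧
      (∀ z ∈ Z, ∀ w ∈ Z, z * w = 0) ∧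
      IsCompl (Submodule.span F {e i0}) Z := by
  intro Z hZ
  subst hZ
  set S : Set A := {x : A | ∃ i, x = e i - e i0} with hS
  have hgen : ∀ i, e i - e i0 ∈ Submodule.span F S :=
    fun i => Submodule.subset_span ⟨i, rfl⟩
  have hzz : ∀ i j, (e i - e i0) * (e j - e i0) = 0 := by
    intro i j
    rw [sub_mul, mul_sub, mul_sub, hmul, hmul, hmul, hmul]
    module
  have hl : ∀ j i, e j * (e i - e i0) = lam • (e i - e i0) := by
    intro j i; rw [mul_sub, hmul, hmul]; module
  have hr : ∀ i j, (e i - e i0) * e j = (1 - lam) • (e i - e i0) := by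
    intro i j; rw [sub_mul, hmul, hmul]; module
  have ideal1 : ∀ i, ∀ u : A,
      u * (e i - e i0) ∈ Submodule.span F S ∧ (e i - e i0) * u ∈ Submodule.span F S := by
    intro i u
    have hu : u ∈ Submodule.span F (Set.range e) := hspan ▸ Submodule.mem_top
    induction hu using Submodule.span_induction with
    | mem x hx =>
        obtain ⟨j, rfl⟩ := hx
        exact ⟨by rw [hl]; exact Submodule.smul_mem _ _ (hgen i),
               by rw [hr]; exact Submodule.smul_mem _ _ (hgen i)⟩
    | zero => simp
    | add x y hx hy ihx ihy =>
        exact ⟨by rw [add_mul]; exact Submodule.add_mem _ ihx.1 ihy.1,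
               by rw [mul_add]; exact Submodule.add_mem _ ihx.2 ihy.2⟩
    | smul c x hx ih =>
        exact ⟨by rw [smul_mul_assoc]; exact Submodule.smul_mem _ _ ih.1,
               by rw [mul_smul_comm]; exact Submodule.smul_mem _ _ ih.2⟩
  refine ⟨?_, ?_, ?_⟩
  · intro z hz u
    induction hz using Submodule.span_induction with
    | mem x hx => obtain ⟨i, rfl⟩ := hx; exact ideal1 i u
    | zero => simp
    | add x y hx hy ihx ihy =>
        exact ⟨by rw [mul_add]; exact Submodule.add_mem _ ihx.1 ihy.1,
               by rw [add_mul]; exact Submodule.add_mem _ ihx.2 ihy.2⟩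
    | smul c x hx ih =>
        exact ⟨by rw [mul_smul_comm]; exact Submodule.smul_mem _ _ ih.1,
               by rw [smul_mul_assoc]; exact Submodule.smul_mem _ _ ih.2⟩
  · intro z hz
    induction hz using Submodule.span_induction with
    | mem x hx =>
        intro w hw
        obtain ⟨i, rfl⟩ := hx
        induction hw using Submodule.span_induction with
        | mem y hy => obtain ⟨j, rfl⟩ := hy; exact hzz i j
        | zero => simp
        | add a b _ _ iha ihb => rw [mul_add, iha, ihb, add_zero]
        | smul c a _ iha => rw [mul_smul_comm, iha, smul_zero]
    | zero => intro w hw; simp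
    | add a b _ _ iha ihb => intro w hw; rw [add_mul, iha w hw, ihb w hw, add_zero]
    | smul c a _ iha => intro w hw; rw [smul_mul_assoc, iha w hw, smul_zero]
  · set b : Module.Basis I F A := Module.Basis.mk hindep hspan.ge with hb
    set f : A →ₗ[F] F := b.constr F (fun _ => (1 : F)) with hf
    have hfe : ∀ i, f (e i) = 1 := by
      intro i
      have : f (b i) = 1 := b.constr_basis F _ i
      simpa [hb, Module.Basis.mk_apply] using this
    have hZker : Submodule.span F S ≤ LinearMap.ker f := by
      rw [Submodule.span_le]
      rintro x ⟨i, rfl⟩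
      simp [LinearMap.mem_ker, map_sub, hfe]
    constructor
    · rw [disjoint_iff_inf_le]
      rintro x ⟨hx1, hx2⟩
      obtain ⟨c, rfl⟩ := Submodule.mem_span_singleton.mp hx1
      have : f (c • e i0) = 0 := hZker hx2
      rw [map_smul, hfe, smul_eq_mul, mul_one] at this
      simp [this]
    · rw [codisjoint_iff_le_sup]
      rw [← hspan, Submodule.span_le]
      rintro x ⟨i, rfl⟩
      have : e i = e i0 + (e i - e i0) := by abel
      rw [this]
      exact Submodule.add_mem _
        (Submodule.mem_sup_left (Submodule.mem_span_singleton_self _))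
        (Submodule.mem_sup_right (hgen i))
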